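/- For all natural numbers 0 ≤ k < l, the diagram formed by δ_k^l, I_k^l, I_{k+1}^l and δ_k^{l+1} commutes: δ_k^{l+1} ∘ I_k^l = I_{k+1}^l ∘ δ_k^l as linear maps from ℤ^{M_k^l} to ℤ^{M_{k+1}^{l+1}}. -/

import Mathlib

open scoped ENNReal
open Classical
set_option linter.unusedSectionVars false
set_option synthInstance.maxHeartbeats 1000000
set_option maxHeartbeats 1000000

noncomputable section

variable {𝔞 : Type*} [Fintype 𝔞] [Nonempty 𝔞] [TopologicalSpace 𝔞] [DiscreteTopology 𝔞]

/-- The one-sided shift map on the full one-sided shift `𝔞^ℕ`. -/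
def shift (x : ℕ → 𝔞) : ℕ → 𝔞 := fun n => x (n + 1)

/-- Concatenation `u x` of a finite word `u` with an infinite sequence `x`. -/
def wcat (u : List 𝔞) (x : ℕ → 𝔞) : ℕ → 𝔞 := fun n =>
  if h : n < u.length then u.get ⟨n, h⟩ else x (n - u.length)

/-- `l∞(X)`: the C*-algebra of bounded complex-valued functions on `X`,
with pointwise operations and the supremum norm. -/
abbrev Linf (X : Set (ℕ → 𝔞)) : Type _ := lp (fun _ : X => ℂ) ∞

/-- `P_k(x) = {u ∈ 𝔞^k : ux ∈ X}`. -/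
def Pk (X : Set (ℕ → 𝔞)) (k : ℕ) (x : ℕ → 𝔞) : Set (List 𝔞) :=
  {u | u.length = k ∧ wcat u x ∈ X}

/-- `l`-past equivalence on `X`: `x ∼_l y` iff `⋃_{k≤l} P_k(x) = ⋃_{k≤l} P_k(y)`. -/
def pastSetoid (X : Set (ℕ → 𝔞)) (l : ℕ) : Setoid X where
  r x y := (⋃ k ≤ l, Pk X k (x : ℕ → 𝔞)) = ⋃ k ≤ l, Pk X k (y : ℕ → 𝔞)
  iseqv := ⟨fun _ => rfl, Eq.symm, Eq.trans⟩

/-- The (finite) set of `l`-past equivalence classes of `X`. -/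
abbrev PastQuot (X : Set (ℕ → 𝔞)) (l : ℕ) : Type _ := Quotient (pastSetoid X l)

/-- An `l`-past equivalence class, as a subset of `X`. -/
def clsOf (X : Set (ℕ → 𝔞)) (l : ℕ) (q : PastQuot X l) : Set X :=
  {y : X | Quotient.mk (pastSetoid X l) y = q}

lemma mem_iUnion_Pk_length_le {X : Set (ℕ → 𝔞)} {l : ℕ} {x : ℕ → 𝔞} {u : List 𝔞}
    (h : u ∈ ⋃ k ≤ l, Pk X k x) : u.length ≤ l := by
  simp only [Set.mem_iUnion, Pk, Set.mem_setOf_eq] at h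
  obtain ⟨k, hk, hlen, -⟩ := h
  omega

lemma pastQuot_finite (X : Set (ℕ → 𝔞)) (l : ℕ) : Finite (PastQuot X l) := by
  have hlift : ∀ a b : X, (pastSetoid X l).r a b →
      ({u : {u : List 𝔞 // u.length ≤ l} | (u : List 𝔞) ∈ ⋃ k ≤ l, Pk X k (a : ℕ → 𝔞)}
        : Set {u : List 𝔞 // u.length ≤ l}) =
      {u : {u : List 𝔞 // u.length ≤ l} | (u : List 𝔞) ∈ ⋃ k ≤ l, Pk X k (b : ℕ → 𝔞)} := by
    intro a b hab
    have : (⋃ k ≤ l, Pk X k (a : ℕ → 𝔞)) = ⋃ k ≤ l, Pk X k (b : ℕ → 𝔞) := hab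
    rw [this]
  haveI : Finite {u : List 𝔞 // u.length ≤ l} := (List.finite_length_le 𝔞 l).to_subtype
  apply Finite.of_injective (f := fun q : PastQuot X l => Quotient.lift _ hlift q)
  intro q₁ q₂ h
  obtain ⟨a, rfl⟩ := Quotient.exists_rep q₁
  obtain ⟨b, rfl⟩ := Quotient.exists_rep q₂
  apply Quotient.sound
  show (⋃ k ≤ l, Pk X k (a : ℕ → 𝔞)) = ⋃ k ≤ l, Pk X k (b : ℕ → 𝔞)
  simp only [Quotient.lift_mk] at h
  ext u
  constructor
  · intro hu
    have hlen : u.length ≤ l := mem_iUnion_Pk_length_le hu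
    have := Set.ext_iff.mp h ⟨u, hlen⟩
    exact this.mp hu
  · intro hu
    have hlen : u.length ≤ l := mem_iUnion_Pk_length_le hu
    have := Set.ext_iff.mp h ⟨u, hlen⟩
    exact this.mpr hu

/-- `M_k^l`: the set of `l`-past equivalence classes `E` with `P_k(E) ≠ ∅`. -/
def Mset (X : Set (ℕ → 𝔞)) (k l : ℕ) : Set (PastQuot X l) :=
  {q | ∃ x : X, Quotient.mk (pastSetoid X l) x = q ∧ (Pk X k (x : ℕ → 𝔞)).Nonempty}

/-- The entry `I_l(i,j)`: `1` if `E_i^{l+1} ⊆ E_j^l`, else `0`. -/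
def Ient (X : Set (ℕ → 𝔞)) (l : ℕ) (i : PastQuot X (l + 1)) (j : PastQuot X l) : ℤ :=
  if clsOf X (l + 1) i ⊆ clsOf X l j then 1 else 0

/-- `aE = {ax ∈ X : x ∈ E}` for a letter `a` and a set `E ⊆ X`. -/
def lset (X : Set (ℕ → 𝔞)) (a : 𝔞) (s : Set X) : Set X :=
  {y : X | ∃ x ∈ s, (y : ℕ → 𝔞) = wcat [a] (x : ℕ → 𝔞)}

/-- The entry `A_l(i,j,a)`: `1` if `∅ ≠ aE_i^{l+1} ⊆ E_j^l`, else `0`. -/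
def Aent (X : Set (ℕ → 𝔞)) (l : ℕ) (i : PastQuot X (l + 1)) (j : PastQuot X l) (a : 𝔞) : ℤ :=
  if (lset X a (clsOf X (l + 1) i)).Nonempty ∧ lset X a (clsOf X (l + 1) i) ⊆ clsOf X l j
    then 1 else 0

/-- The linear map `ℤ^M → ℤ^N` with matrix entries `c : N → M → ℤ`,
sending `e_j` to `∑_i c i j • e_i`. -/
def matLin {M N : Type*} [Finite M] (c : N → M → ℤ) : (M → ℤ) →ₗ[ℤ] (N → ℤ) where
  toFun f := fun i => ∑ᶠ j : M, c i j * f j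
  map_add' f g := by
    funext i
    calc ∑ᶠ j : M, c i j * (f j + g j)
        = ∑ᶠ j : M, (c i j * f j + c i j * g j) := finsum_congr fun j => mul_add _ _ _
      _ = (∑ᶠ j : M, c i j * f j) + ∑ᶠ j : M, c i j * g j :=
          finsum_add_distrib (Set.toFinite _) (Set.toFinite _)
  map_smul' r f := by
    funext i
    simp only [Pi.smul_apply, smul_eq_mul, RingHom.id_apply]
    calc ∑ᶠ j : M, c i j * (r * f j)
        = ∑ᶠ j : M, r * (c i j * f j) := finsum_congr fun j => by ring
      _ = r * ∑ᶠ j : M, c i j * f j := (mul_finsum _ _).symm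

/-- The map `I_k^l : ℤ^{M_k^l} → ℤ^{M_k^{l+1}}`, `e_j ↦ ∑_{i ∈ M_k^{l+1}} I_l(i,j) e_i`. -/
def Imap (X : Set (ℕ → 𝔞)) (k l : ℕ) : (Mset X k l → ℤ) →ₗ[ℤ] (Mset X k (l + 1) → ℤ) :=
  haveI : Finite (PastQuot X l) := pastQuot_finite X l
  matLin fun (i : Mset X k (l + 1)) (j : Mset X k l) =>
    Ient X l (i : PastQuot X (l + 1)) (j : PastQuot X l)

/-- The map `A_k^l : ℤ^{M_k^l} → ℤ^{M_{k+1}^{l+1}}`,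
`e_j ↦ ∑_{i ∈ M_{k+1}^{l+1}} ∑_{a ∈ 𝔞} A_l(i,j,a) e_i`. -/
def Amap (X : Set (ℕ → 𝔞)) (k l : ℕ) : (Mset X k l → ℤ) →ₗ[ℤ] (Mset X (k + 1) (l + 1) → ℤ) :=
  haveI : Finite (PastQuot X l) := pastQuot_finite X l
  matLin fun (i : Mset X (k + 1) (l + 1)) (j : Mset X k l) =>
    ∑ a : 𝔞, Aent X l (i : PastQuot X (l + 1)) (j : PastQuot X l) a

/-- The map `δ_k^l : ℤ^{M_k^l} → ℤ^{M_{k+1}^l}`, `e_j ↦ e_j` if `j ∈ M_{k+1}^l`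
and `e_j ↦ 0` otherwise. -/
def Deltamap (X : Set (ℕ → 𝔞)) (k l : ℕ) : (Mset X k l → ℤ) →ₗ[ℤ] (Mset X (k + 1) l → ℤ) :=
  haveI : Finite (PastQuot X l) := pastQuot_finite X l
  matLin fun (i : Mset X (k + 1) l) (j : Mset X k l) =>
    if (i : PastQuot X l) = (j : PastQuot X l) then 1 else 0

lemma wcat_tail {x : ℕ → 𝔞} (u : List 𝔞) (hu : u.length ≠ 0) :
    wcat u.tail x = shift (wcat u x) := by
  funext n
  simp only [wcat, shift, List.length_tail]
  by_cases hn : n < u.length - 1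
  · rw [dif_pos hn, dif_pos (by omega)]
    simp [List.get_eq_getElem, List.getElem_tail]
  · rw [dif_neg hn, dif_neg (by omega)]
    congr 1
    omega

lemma Pk_nonempty_of_succ {X : Set (ℕ → 𝔞)} (hXinv : ∀ x ∈ X, shift x ∈ X) {k : ℕ}
    {x : ℕ → 𝔞} (h : (Pk X (k + 1) x).Nonempty) : (Pk X k x).Nonempty := by
  obtain ⟨u, hlen, hmem⟩ := h
  refine ⟨u.tail, ?_, ?_⟩
  · simp [hlen]
  · rw [wcat_tail u (by omega)]
    exact hXinv _ hmem

lemma matLin_comp {M N P : Type*} [Finite M] [Finite N] (c : P → N → ℤ) (d : N → M → ℤ) :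
    (matLin c).comp (matLin d) = matLin (fun p m => ∑ᶠ n, c p n * d n m) := by
  apply LinearMap.ext
  intro f
  funext p
  haveI : Fintype M := Fintype.ofFinite M
  haveI : Fintype N := Fintype.ofFinite N
  show ∑ᶠ n, c p n * ∑ᶠ m, d n m * f m = ∑ᶠ m, (∑ᶠ n, c p n * d n m) * f m
  simp only [finsum_eq_sum_of_fintype]
  simp only [Finset.mul_sum, Finset.sum_mul]
  rw [Finset.sum_comm]
  exact Finset.sum_congr rfl fun m _ => Finset.sum_congr rfl fun n _ => by ring

/-- for all `0 ≤ k < l`, the diagram formed by `δ_k^l`, `I_k^l`, `I_{k+1}^l`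
and `δ_k^{l+1}` commutes: `δ_k^{l+1} ∘ I_k^l = I_{k+1}^l ∘ δ_k^l`. -/
theorem deltaI_diagram_commutes (X : Set (ℕ → 𝔞)) (hXclosed : IsClosed X)
    (hXinv : ∀ x ∈ X, shift x ∈ X) (k l : ℕ) (hkl : k < l) :
    (Deltamap X k (l + 1)).comp (Imap X k l) = (Imap X (k + 1) l).comp (Deltamap X k l) := by
  haveI : Finite (PastQuot X l) := pastQuot_finite X l
  haveI : Finite (PastQuot X (l + 1)) := pastQuot_finite X (l + 1)
  simp only [Deltamap, Imap]
  rw [matLin_comp, matLin_comp]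
  congr 1
  funext i j
  have hiMem : (↑i : PastQuot X (l + 1)) ∈ Mset X k (l + 1) := by
    obtain ⟨x, hx, hne⟩ := i.2
    exact ⟨x, hx, Pk_nonempty_of_succ hXinv hne⟩
  have hL : (∑ᶠ j' : Mset X k (l + 1),
      (if (i : PastQuot X (l + 1)) = (j' : PastQuot X (l + 1)) then (1 : ℤ) else 0) *
        Ient X l (j' : PastQuot X (l + 1)) (j : PastQuot X l))
      = Ient X l (i : PastQuot X (l + 1)) (j : PastQuot X l) := by
    rw [finsum_eq_single _ (⟨↑i, hiMem⟩ : Mset X k (l + 1))]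
    · rw [if_pos rfl, one_mul]
    · intro b hb
      rw [if_neg, zero_mul]
      intro heq
      exact hb (Subtype.ext heq.symm)
  rw [hL]
  by_cases hsub : clsOf X (l + 1) (i : PastQuot X (l + 1)) ⊆ clsOf X l (j : PastQuot X l)
  · have hjMem : (↑j : PastQuot X l) ∈ Mset X (k + 1) l := by
      obtain ⟨x, hx, hne⟩ := i.2
      exact ⟨x, hsub hx, hne⟩
    rw [finsum_eq_single _ (⟨↑j, hjMem⟩ : Mset X (k + 1) l)]
    · rw [if_pos rfl, mul_one]
    · intro b hb
      rw [if_neg, mul_zero]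
      intro heq
      exact hb (Subtype.ext heq)
  · rw [Ient, if_neg hsub]
    symm
    apply finsum_eq_zero_of_forall_eq_zero
    intro b
    by_cases hbj : (b : PastQuot X l) = (j : PastQuot X l)
    · rw [hbj, Ient, if_neg hsub, zero_mul]
    · rw [if_neg hbj, mul_zero]

end
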